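/- (Necessity of the balancing condition.) Let ‖·‖ be a smooth norm on ℝ^n, let p₁,…,p_m, q be nonzero points with dual vectors p_i*, q*, let t_i > 0 and let w be a weight function. If the star network with center o (the origin), edges op_i carrying flow t_i with cost w(t_i)‖p_i‖ and edge oq carrying flow Σt_i with cost w(Σt_i)‖q‖, minimizes cost over all positions of the center point, then Σ_{i=1}^m w(t_i) p_i* + w(Σ_{i=1}^m t_i) q* = 0. -/

import Mathlib

open scoped BigOperators
open Filter Topology

noncomputable def dualNorm {n : ℕ} (N : EuclideanSpace ℝ (Fin n) → ℝ)
    (z : EuclideanSpace ℝ (Fin n)) : ℝ :=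
  sSup ((fun x => (inner ℝ z x : ℝ)) '' {x | N x ≤ 1})

def IsNorm {n : ℕ} (N : EuclideanSpace ℝ (Fin n) → ℝ) : Prop :=
  (∀ x, 0 ≤ N x) ∧ (∀ x, N x = 0 ↔ x = 0) ∧
  (∀ (a : ℝ) (x : EuclideanSpace ℝ (Fin n)), N (a • x) = |a| * N x) ∧
  (∀ x y, N (x + y) ≤ N x + N y)

/-- If the dual norm of `z` is `1`, then `⟪z, y⟫ ≤ N y` for all `y`. -/
lemma support_ineq {n : ℕ} (N : EuclideanSpace ℝ (Fin n) → ℝ) (hN : IsNorm N)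
    (z : EuclideanSpace ℝ (Fin n)) (hz : dualNorm N z = 1) :
    ∀ y, (inner ℝ z y : ℝ) ≤ N y := by
  obtain ⟨hpos, hzero, hhomog, htri⟩ := hN
  have hbdd : BddAbove ((fun x => (inner ℝ z x : ℝ)) '' {x | N x ≤ 1}) := by
    by_contra h
    rw [dualNorm, Real.sSup_of_not_bddAbove h] at hz
    norm_num at hz
  intro y
  by_cases hy : y = 0
  · subst hy
    simp only [inner_zero_right]
    exact hpos 0
  · have hNy : 0 < N y := by
      rcases lt_or_eq_of_le (hpos y) with h | h
      · exact h
      · exact absurd ((hzero y).mp h.symm) hy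
    have hx : N ((N y)⁻¹ • y) ≤ 1 := by
      rw [hhomog, abs_of_nonneg (inv_nonneg.mpr hNy.le), inv_mul_cancel₀ hNy.ne']
    have hmem : (inner ℝ z ((N y)⁻¹ • y) : ℝ) ∈
        ((fun x => (inner ℝ z x : ℝ)) '' {x | N x ≤ 1}) :=
      Set.mem_image_of_mem _ hx
    have hle : (inner ℝ z ((N y)⁻¹ • y) : ℝ) ≤ 1 := by
      have := le_csSup hbdd hmem
      rwa [← dualNorm, hz] at this
    rw [real_inner_smul_right] at hle
    calc (inner ℝ z y : ℝ) = N y * ((N y)⁻¹ * inner ℝ z y) := by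
          field_simp
      _ ≤ N y * 1 := mul_le_mul_of_nonneg_left hle hNy.le
      _ = N y := mul_one _

/-- At a point of differentiability, a supporting functional equals the derivative. -/
lemma fderiv_eq_inner {n : ℕ} (N : EuclideanSpace ℝ (Fin n) → ℝ)
    (x z : EuclideanSpace ℝ (Fin n))
    (hdiff : DifferentiableAt ℝ N x)
    (hzx : (inner ℝ z x : ℝ) = N x)
    (hsupp : ∀ y, (inner ℝ z y : ℝ) ≤ N y) :
    ∀ y, fderiv ℝ N x y = (inner ℝ z y : ℝ) := by
  intro y
  set d : ℝ := fderiv ℝ N x y with hd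
  set f : ℝ → ℝ := fun u => N (x + u • y) with hf
  have hline : HasDerivAt f d 0 := by
    have h1 : HasDerivAt (fun u : ℝ => x + u • y) y 0 := by
      simpa using ((hasDerivAt_id (0 : ℝ)).smul_const y).const_add x
    have h2 : HasFDerivAt N (fderiv ℝ N x) ((fun u : ℝ => x + u • y) 0) := by
      simpa using hdiff.hasFDerivAt
    exact h2.comp_hasDerivAt 0 h1
  have key : ∀ u : ℝ, u * (inner ℝ z y : ℝ) ≤ f u - f 0 := by
    intro u
    have h1 : (inner ℝ z (x + u • y) : ℝ) ≤ N (x + u • y) := hsupp _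
    rw [inner_add_right, real_inner_smul_right, hzx] at h1
    have h0 : f 0 = N x := by simp [hf]
    simp only [hf, h0]
    linarith
  have hslope := hasDerivAt_iff_tendsto_slope.mp hline
  have hsub1 : 𝓝[>] (0:ℝ) ≤ 𝓝[≠] (0:ℝ) :=
    nhdsWithin_mono 0 (fun u hu => ne_of_gt hu)
  have hsub2 : 𝓝[<] (0:ℝ) ≤ 𝓝[≠] (0:ℝ) :=
    nhdsWithin_mono 0 (fun u hu => ne_of_lt hu)
  have hge : (inner ℝ z y : ℝ) ≤ d := by
    refine ge_of_tendsto (hslope.mono_left hsub1) ?_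
    filter_upwards [self_mem_nhdsWithin] with u (hu : 0 < u)
    rw [slope_def_field, sub_zero, le_div_iff₀ hu]
    simpa [mul_comm] using key u
  have hle : d ≤ (inner ℝ z y : ℝ) := by
    refine le_of_tendsto (hslope.mono_left hsub2) ?_
    filter_upwards [self_mem_nhdsWithin] with u (hu : u < 0)
    rw [slope_def_field, sub_zero, div_le_iff_of_neg hu]
    simpa [mul_comm] using key u
  linarith

theorem balancing_necessary {n m : ℕ} (N : EuclideanSpace ℝ (Fin n) → ℝ)
    (hN : IsNorm N)
    (hsmooth : ∀ x : EuclideanSpace ℝ (Fin n), x ≠ 0 → DifferentiableAt ℝ N x)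
    (p : Fin m → EuclideanSpace ℝ (Fin n)) (q : EuclideanSpace ℝ (Fin n))
    (hp : ∀ i, p i ≠ 0) (hq : q ≠ 0)
    (t : Fin m → ℝ) (ht : ∀ i, 0 < t i) (w : ℝ → ℝ)
    (ps : Fin m → EuclideanSpace ℝ (Fin n)) (qs : EuclideanSpace ℝ (Fin n))
    (hps : ∀ i, (inner ℝ (ps i) (p i) : ℝ) = N (p i) ∧ dualNorm N (ps i) = 1)
    (hqs : (inner ℝ qs q : ℝ) = N q ∧ dualNorm N qs = 1)
    (hmin : ∀ s : EuclideanSpace ℝ (Fin n),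
      ∑ i, w (t i) * N (p i) + w (∑ i, t i) * N q ≤
        ∑ i, w (t i) * N (p i - s) + w (∑ i, t i) * N (q - s)) :
    ∑ i, w (t i) • ps i + w (∑ i, t i) • qs = 0 := by
  have hgrad : ∀ i, ∀ y, fderiv ℝ N (p i) y = (inner ℝ (ps i) y : ℝ) := fun i =>
    fderiv_eq_inner N (p i) (ps i) (hsmooth _ (hp i)) (hps i).1
      (support_ineq N hN _ (hps i).2)
  have hgradq : ∀ y, fderiv ℝ N q y = (inner ℝ qs y : ℝ) :=
    fderiv_eq_inner N q qs (hsmooth _ hq) hqs.1 (support_ineq N hN _ hqs.2)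
  set F : EuclideanSpace ℝ (Fin n) → ℝ :=
    fun s => ∑ i, w (t i) * N (p i - s) + w (∑ i, t i) * N (q - s) with hF
  have hlocmin : IsLocalMin F 0 := by
    apply Filter.Eventually.of_forall
    intro s
    have h0 : F 0 = ∑ i, w (t i) * N (p i) + w (∑ i, t i) * N q := by
      simp [hF]
    rw [h0]
    exact hmin s
  have hterm : ∀ i, HasFDerivAt (fun s => w (t i) * N (p i - s))
      (w (t i) • (-(fderiv ℝ N (p i)))) 0 := by
    intro i
    have h1 : HasFDerivAt (fun s : EuclideanSpace ℝ (Fin n) => p i - s)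
        (-(ContinuousLinearMap.id ℝ (EuclideanSpace ℝ (Fin n)))) 0 :=
      (hasFDerivAt_id 0).const_sub (p i)
    have h2 : HasFDerivAt N (fderiv ℝ N (p i)) (p i - 0) := by
      simpa using (hsmooth _ (hp i)).hasFDerivAt
    have h3 := h2.comp (0 : EuclideanSpace ℝ (Fin n)) h1
    have h4 : (fderiv ℝ N (p i)).comp
        (-(ContinuousLinearMap.id ℝ (EuclideanSpace ℝ (Fin n)))) =
        -(fderiv ℝ N (p i)) := by
      ext y; simp
    rw [h4] at h3
    exact h3.const_mul (w (t i))
  have htermq : HasFDerivAt (fun s => w (∑ i, t i) * N (q - s))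
      (w (∑ i, t i) • (-(fderiv ℝ N q))) 0 := by
    have h1 : HasFDerivAt (fun s : EuclideanSpace ℝ (Fin n) => q - s)
        (-(ContinuousLinearMap.id ℝ (EuclideanSpace ℝ (Fin n)))) 0 :=
      (hasFDerivAt_id 0).const_sub q
    have h2 : HasFDerivAt N (fderiv ℝ N q) (q - 0) := by
      simpa using (hsmooth _ hq).hasFDerivAt
    have h3 := h2.comp (0 : EuclideanSpace ℝ (Fin n)) h1
    have h4 : (fderiv ℝ N q).comp
        (-(ContinuousLinearMap.id ℝ (EuclideanSpace ℝ (Fin n)))) =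
        -(fderiv ℝ N q) := by
      ext y; simp
    rw [h4] at h3
    exact h3.const_mul (w (∑ i, t i))
  have hsum : HasFDerivAt F
      ((∑ i, w (t i) • (-(fderiv ℝ N (p i)))) + w (∑ i, t i) • (-(fderiv ℝ N q))) 0 :=
    (HasFDerivAt.fun_sum (fun i _ => hterm i)).add htermq
  have hD0 := hlocmin.hasFDerivAt_eq_zero hsum
  set v := ∑ i, w (t i) • ps i + w (∑ i, t i) • qs with hv
  have happ : ((∑ i, w (t i) • (-(fderiv ℝ N (p i)))) +
      w (∑ i, t i) • (-(fderiv ℝ N q))) v = 0 := by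
    rw [hD0]; rfl
  simp only [ContinuousLinearMap.add_apply, ContinuousLinearMap.sum_apply,
    ContinuousLinearMap.smul_apply, ContinuousLinearMap.neg_apply] at happ
  have happ2 : ∑ i, w (t i) * (inner ℝ (ps i) v : ℝ) +
      w (∑ i, t i) * (inner ℝ qs v : ℝ) = 0 := by
    have heq : ∀ i, w (t i) • -(fderiv ℝ N (p i) v) =
        -(w (t i) * (inner ℝ (ps i) v : ℝ)) := by
      intro i; rw [hgrad i v]; simp [smul_eq_mul]
    simp only [heq, hgradq v, smul_eq_mul, Finset.sum_neg_distrib] at happ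
    linarith
  have hvv : (inner ℝ v v : ℝ) = 0 := by
    rw [hv, inner_add_left, sum_inner]
    simp only [real_inner_smul_left]
    rw [← hv]
    exact happ2
  exact inner_self_eq_zero.mp hvv
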